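/- Let k be a field of characteristic ≠ 2, G an algebraic supergroup with associated Harish-Chandra pair (G₀, V), and H a closed super-subgroup of G corresponding to the sub-pair (H₀, W). Let v ∈ V. If e(a,v) := 1 + a·v ∈ H(A) for some super-commutative k-superalgebra A and some nonzero odd element a ∈ A₁, then v ∈ W. -/

import Mathlib

/-!
STATEMENT 15 (Lemma 5.3, (iii) ⇒ (i)).  Let `k` be a field of
characteristic `≠ 2`, `𝐆` an algebraic supergroup with associated
Harish-Chandra pair `(G₀, V)`, and `𝐇` a closed super-subgroup
corresponding to the sub-pair `(H₀, W)`.  Let `v ∈ V`.  If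
`e(a,v) ∈ 𝐇(A)` for some super-commutative `k`-superalgebra `A` and some
nonzero `a ∈ A₁`, then `v ∈ W`.

Following the context, `𝐆` is realized so that the normal-form theorem
holds: for any basis `v₁,…,vₙ` of `V`, every element of `𝐆(A)` is uniquely
`g · e(a₁,v₁) ⋯ e(aₙ,vₙ)` with `g ∈ G₀(A₀)`, `aᵢ ∈ A₁`, and similarly for
`𝐇` with any basis of `W`.  We model `𝐆(A)` as a group `GA`, with
subgroups `G0 = G₀(A₀)`, `H0 = H₀(A₀)` and `HA = 𝐇(A)`, `A₁` as a
`k`-module `A1`, and `e : A₁ × V → 𝐆(A)`, which is exponential-additive in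
`V` and satisfies `e(c a, v) = e(a, c v)`.
-/
theorem mem_W_of_e_mem_H
    (k : Type*) [Field k] (hchar : (2 : k) ≠ 0)
    (V : Type*) [AddCommGroup V] [Module k V] [FiniteDimensional k V]
    (W : Submodule k V)
    (A1 : Type*) [AddCommGroup A1] [Module k A1]
    (GA : Type*) [Group GA]
    (G0 H0 HA : Subgroup GA)
    (hH0G0 : H0 ≤ G0) (hH0HA : H0 ≤ HA)
    (e : A1 → V → GA)
    (he_add : ∀ (a : A1) (v v' : V), e a (v + v') = e a v * e a v')
    (he_smul : ∀ (c : k) (a : A1) (v : V), e a (c • v) = e (c • a) v)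
    -- normal form in `𝐆(A)` for any basis of `V`
    (hGnf : ∀ (n : ℕ) (vb : Fin n → V), LinearIndependent k vb →
      Submodule.span k (Set.range vb) = ⊤ →
      Function.Bijective (fun p : G0 × (Fin n → A1) =>
        (p.1 : GA) * (List.ofFn fun i => e (p.2 i) (vb i)).prod))
    -- normal form in `𝐇(A)` for any basis of `W`
    (hHnf : ∀ (r : ℕ) (wb : Fin r → V), LinearIndependent k wb →
      Submodule.span k (Set.range wb) = W →
      Set.range (fun p : H0 × (Fin r → A1) =>
        (p.1 : GA) * (List.ofFn fun i => e (p.2 i) (wb i)).prod) =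
        (HA : Set GA))
    (v : V) (a : A1) (ha : a ≠ 0)
    (hmem : e a v ∈ HA) :
    v ∈ W := by
  classical
  -- e b 0 = 1
  have hzero : ∀ b : A1, e b 0 = 1 := by
    intro b
    have h := he_add b 0 0
    rw [add_zero] at h
    exact (left_eq_mul.mp h)
  -- e 0 v' = 1
  have hzero' : ∀ v' : V, e (0 : A1) v' = 1 := by
    intro v'
    have h := he_smul 0 a v'
    rw [zero_smul, zero_smul] at h
    rw [← h, hzero]
  -- product formula
  have hprod : ∀ (m : ℕ) (b : A1) (f : Fin m → V),
      e b (∑ i, f i) = (List.ofFn fun i => e b (f i)).prod := by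
    intro m
    induction m with
    | zero => intro b f; simp [hzero]
    | succ m ih =>
      intro b f
      rw [Fin.sum_univ_succ, he_add, List.ofFn_succ, List.prod_cons, ih]
  -- set up bases
  obtain ⟨U, hU⟩ := Submodule.exists_isCompl W
  have : FiniteDimensional k U := inferInstance
  set r := Module.finrank k W with hr
  set m := Module.finrank k U with hm
  let bW : Module.Basis (Fin r) k W := Module.finBasis k W
  let bU : Module.Basis (Fin m) k U := Module.finBasis k U
  let eqv : (W × U) ≃ₗ[k] V := Submodule.prodEquivOfIsCompl W U hU
  let vb : Module.Basis (Fin (r + m)) k V := ((bW.prod bU).map eqv).reindex finSumFinEquiv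
  let wb : Fin r → V := fun i => (bW i : V)
  have hvb_cast : ∀ i : Fin r, vb (Fin.castAdd m i) = wb i := by
    intro i
    simp [vb, wb, eqv, Module.Basis.reindex_apply, Module.Basis.map_apply, Module.Basis.prod_apply,
      Submodule.coe_prodEquivOfIsCompl]
  -- wb is linearly independent with span W
  have hliW : LinearIndependent k wb :=
    bW.linearIndependent.map' W.subtype W.ker_subtype
  have hspanW : Submodule.span k (Set.range wb) = W := by
    have hrange : Set.range wb = W.subtype '' Set.range bW := by
      ext x
      simp [wb, Set.range_comp]
    rw [hrange, Submodule.span_image, bW.span_eq, Submodule.map_top,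
      Submodule.range_subtype]
  -- express e a v in normal form
  set c : Fin (r + m) → k := fun j => vb.repr v j with hc
  have hv : v = ∑ j, c j • vb j := (Module.Basis.sum_repr vb v).symm
  have hav : e a v = (List.ofFn fun j => e (c j • a) (vb j)).prod := by
    rw [hv, hprod]
    simp only [he_smul]
  -- get H normal form
  obtain ⟨⟨h, b⟩, hb⟩ : e a v ∈ Set.range (fun p : H0 × (Fin r → A1) =>
      (p.1 : GA) * (List.ofFn fun i => e (p.2 i) (wb i)).prod) := by
    rw [hHnf r wb hliW hspanW]; exact hmem
  -- extend b by zero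
  let b' : Fin (r + m) → A1 := fun j => Sum.elim b (fun _ => 0) (finSumFinEquiv.symm j)
  have hb'_cast : ∀ i : Fin r, b' (Fin.castAdd m i) = b i := by
    intro i; simp [b']
  have hb'_nat : ∀ i : Fin m, b' (Fin.natAdd r i) = 0 := by
    intro i; simp [b']
  have hprod' : (List.ofFn fun j => e (b' j) (vb j)).prod
      = (List.ofFn fun i => e (b i) (wb i)).prod := by
    rw [List.ofFn_add, List.prod_append]
    have h1 : (List.ofFn fun i : Fin r => e (b' (Fin.castAdd m i)) (vb (Fin.castAdd m i)))
        = List.ofFn fun i => e (b i) (wb i) := by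
      congr 1; funext i; rw [hb'_cast, hvb_cast]
    have h2 : (List.ofFn fun i : Fin m => e (b' (Fin.natAdd r i)) (vb (Fin.natAdd r i))).prod
        = 1 := by
      have : (List.ofFn fun i : Fin m => e (b' (Fin.natAdd r i)) (vb (Fin.natAdd r i)))
          = List.ofFn fun _ : Fin m => (1 : GA) := by
        congr 1; funext i; rw [hb'_nat, hzero']
      rw [this]; simp
    erw [h1]; rw [h2, mul_one]
  -- apply injectivity of the G normal form
  have hinj := (hGnf (r + m) vb vb.linearIndependent vb.span_eq).1
  have heq : ((1 : G0), fun j => c j • a) = ((⟨h, hH0G0 h.2⟩ : G0), b') := by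
    apply hinj
    show ((1 : G0) : GA) * _ = ((⟨(h : GA), hH0G0 h.2⟩ : G0) : GA) * _
    rw [Subgroup.coe_one, one_mul, ← hav, hprod']
    exact hb.symm
  have hcoef : (fun j => c j • a) = b' := congrArg Prod.snd heq
  -- coefficients outside W vanish
  have hczero : ∀ i : Fin m, c (Fin.natAdd r i) = 0 := by
    intro i
    have h0 : c (Fin.natAdd r i) • a = 0 := by
      rw [show c (Fin.natAdd r i) • a = b' (Fin.natAdd r i) from congrFun hcoef _,
        hb'_nat]
    rcases smul_eq_zero.mp h0 with h' | h'
    · exact h'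
    · exact absurd h' ha
  -- conclude
  rw [hv, Fin.sum_univ_add]
  have h2 : ∑ i : Fin m, c (Fin.natAdd r i) • vb (Fin.natAdd r i) = 0 := by
    apply Finset.sum_eq_zero
    intro i _
    rw [hczero i, zero_smul]
  rw [h2, add_zero]
  apply Submodule.sum_mem
  intro i _
  rw [hvb_cast i]
  exact W.smul_mem _ (bW i).2
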